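/- Let Y be a homogeneous continuum with filament additivity and dense filament composants. Then the non-singularity relation ¬sng, defined by ¬sng⟨x,y⟩ iff there exists a connected C ⊆ fcs(x) with x ∈ C, y ∈ closure(C), and closure(C) ≠ Y, is symmetric: ¬sng⟨x,y⟩ implies ¬sng⟨y,x⟩. -/

import Mathlib

open Set Metric TopologicalSpace Filter

set_option linter.unusedSectionVars false
set_option linter.unnecessarySimpa false
set_option linter.unusedVariables false
set_option maxHeartbeats 1000000

variable {Y : Type*} [TopologicalSpace Y]

/-- A subcontinuum `K` is filament if it has an open neighborhood in which
the connected component of `K` is nowhere dense. -/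
def IsFilament (K : Set Y) : Prop :=
  IsCompact K ∧ IsConnected K ∧
    ∃ U : Set Y, IsOpen U ∧ K ⊆ U ∧ ∀ k ∈ K, IsNowhereDense (connectedComponentIn U k)

/-- The filament composant of a point. -/
def fcs (x : Y) : Set Y := ⋃₀ {K : Set Y | IsFilament K ∧ x ∈ K}


section EffrosSection
variable {X : Type*} [MetricSpace X] [CompactSpace X] [Nonempty X]

/-- Points reachable from `y` by a self-homeomorphism moving no point more than `ε`. -/
def ESet (ε : ℝ) (y : X) : Set X :=
  {z | ∃ h : X ≃ₜ X, (∀ u, dist (h u) u ≤ ε) ∧ h y = z}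

/-- A homeomorphism as a continuous map. -/
def toCM (h : X ≃ₜ X) : C(X, X) := ⟨h, h.continuous⟩

lemma mov_symm {h : X ≃ₜ X} {ε : ℝ} (hm : ∀ u, dist (h u) u ≤ ε) :
    ∀ u, dist (h.symm u) u ≤ ε := fun u => by
  have := hm (h.symm u)
  rw [h.apply_symm_apply] at this
  simpa [dist_comm] using this

lemma mov_trans {h g : X ≃ₜ X} {ε δ : ℝ} (hm : ∀ u, dist (h u) u ≤ ε)
    (hg : ∀ u, dist (g u) u ≤ δ) : ∀ u, dist ((h.trans g) u) u ≤ ε + δ := fun u =>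
  calc dist (g (h u)) u ≤ dist (g (h u)) (h u) + dist (h u) u := dist_triangle _ _ _
    _ ≤ δ + ε := add_le_add (hg _) (hm _)
    _ = ε + δ := by ring

lemma star_lemma (hhom : ∀ a b : X, ∃ h : X ≃ₜ X, h a = b) (y : X) {ε : ℝ} (hε : 0 < ε) :
    ∃ r > 0, ball y r ⊆ closure (ESet ε y) := by
  have hε2 : 0 < ε / 2 := by linarith
  set S : Set (C(X, X) × C(X, X)) := {p | ∃ h : X ≃ₜ X, p.1 = toCM h ∧ p.2 = toCM h.symm}
    with hS
  obtain ⟨D, hDc, hDd⟩ := TopologicalSpace.exists_countable_dense S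
  haveI : Countable D := hDc.to_subtype
  have hom : ∀ d : D, ∃ h : X ≃ₜ X, (d : ↥S).1.1 = toCM h ∧ (d : ↥S).1.2 = toCM h.symm :=
    fun d => (d : ↥S).2
  choose Hom hHom1 hHom2 using hom
  -- covering
  have hcov : (⋃ d : D, closure (Hom d '' ESet (ε/2) y)) = univ := by
    apply eq_univ_of_forall
    intro w
    obtain ⟨h₀, hh₀⟩ := hhom y w
    have hp₀ : ((toCM h₀, toCM h₀.symm) : C(X,X) × C(X,X)) ∈ S := ⟨h₀, rfl, rfl⟩
    obtain ⟨d, hdD, hdist⟩ :=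
      Metric.mem_closure_iff.mp (hDd ⟨_, hp₀⟩) (ε/2) hε2
    set d' : D := ⟨d, hdD⟩
    set g : X ≃ₜ X := Hom d'
    have hdist2 : dist (toCM h₀.symm) (toCM g.symm) < ε / 2 := by
      have : dist (⟨_, hp₀⟩ : ↥S) d = max (dist (toCM h₀) (d : ↥S).1.1)
          (dist (toCM h₀.symm) (d : ↥S).1.2) := by
        rw [Subtype.dist_eq, Prod.dist_eq]
      rw [this] at hdist
      have := lt_of_le_of_lt (le_max_right _ _) hdist
      rwa [hHom2 d'] at this
    -- k := g.symm ∘ h₀ has movement ≤ ε/2 and k y = g.symm w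
    set k : X ≃ₜ X := h₀.trans g.symm with hk
    have hkmov : ∀ u, dist (k u) u ≤ ε / 2 := by
      intro u
      have h1 : k u = g.symm (h₀ u) := rfl
      have h2 : u = h₀.symm (h₀ u) := (h₀.symm_apply_apply u).symm
      calc dist (k u) u = dist (g.symm (h₀ u)) (h₀.symm (h₀ u)) := by rw [h1, ← h2]
        _ ≤ dist (toCM g.symm) (toCM h₀.symm) := ContinuousMap.dist_apply_le_dist (f := toCM g.symm) (g := toCM h₀.symm) (h₀ u)
        _ ≤ ε / 2 := by rw [dist_comm] at hdist2; exact hdist2.le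
    have hky : k y ∈ ESet (ε/2) y := ⟨k, hkmov, rfl⟩
    have : w ∈ Hom d' '' ESet (ε/2) y := by
      refine ⟨k y, hky, ?_⟩
      show g (g.symm (h₀ y)) = w
      rw [g.apply_symm_apply, hh₀]
    exact mem_iUnion.mpr ⟨d', subset_closure this⟩
  -- Baire
  obtain ⟨d, hd⟩ := nonempty_interior_of_iUnion_of_closed
    (fun d : D => isClosed_closure (s := Hom d '' ESet (ε/2) y)) hcov
  have h1 : closure (Hom d '' ESet (ε/2) y) = Hom d '' closure (ESet (ε/2) y) :=
    ((Hom d).image_closure _).symm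
  rw [h1, ← (Hom d).image_interior] at hd
  obtain ⟨u, hu⟩ := hd.of_image
  -- translation
  have huc : u ∈ closure (ESet (ε/2) y) := interior_subset hu
  obtain ⟨v, hvo, hvE⟩ := _root_.mem_closure_iff.mp huc _ isOpen_interior hu
  obtain ⟨g₀, hg₀mov, hg₀y⟩ := hvE
  set W := g₀.symm '' interior (closure (ESet (ε/2) y)) with hW
  have hWopen : IsOpen W := (Homeomorph.isOpen_image _).mpr isOpen_interior
  have hyW : y ∈ W := ⟨v, hvo, by rw [← hg₀y, g₀.symm_apply_apply]⟩
  have hWsub : W ⊆ closure (ESet ε y) := by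
    rintro w ⟨v', hv', rfl⟩
    rw [_root_.mem_closure_iff]
    intro o ho hmo
    have hv'c : v' ∈ closure (ESet (ε/2) y) := interior_subset hv'
    have hgo : IsOpen (g₀ '' o) := (Homeomorph.isOpen_image _).mpr ho
    have hv'go : v' ∈ g₀ '' o := ⟨g₀.symm v', hmo, g₀.apply_symm_apply v'⟩
    obtain ⟨u', ⟨o', ho', rfl⟩, hu'E⟩ := _root_.mem_closure_iff.mp hv'c _ hgo hv'go
    obtain ⟨kk, hkkmov, hkky⟩ := hu'E
    refine ⟨o', ho', kk.trans g₀.symm, ?_, ?_⟩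
    · have := mov_trans hkkmov (mov_symm hg₀mov)
      intro u; have := this u; linarith [this]
    · show g₀.symm (kk y) = o'
      rw [hkky, g₀.symm_apply_apply]
  obtain ⟨r, hr, hrsub⟩ := Metric.isOpen_iff.mp hWopen y hyW
  exact ⟨r, hr, fun z hz => hWsub (hrsub hz)⟩


lemma uc_modulus (f : X ≃ₜ X) {t : ℝ} (ht : 0 < t) :
    ∃ η > 0, ∀ u v : X, dist u v ≤ η → dist (f u) (f v) ≤ t := by
  have h := CompactSpace.uniformContinuous_of_continuous (α := X) (β := X) f.continuous
  rw [Metric.uniformContinuous_iff] at h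
  obtain ⟨δ, hδ, hd⟩ := h t ht
  exact ⟨δ/2, by linarith, fun u v h' => (hd (lt_of_le_of_lt h' (by linarith))).le⟩

lemma tendsto_of_dist_tendsto {a b : ℕ → X} {L : X}
    (h1 : Tendsto (fun n => dist (a n) (b n)) atTop (nhds 0))
    (h2 : Tendsto b atTop (nhds L)) : Tendsto a atTop (nhds L) := by
  rw [tendsto_iff_dist_tendsto_zero]
  apply squeeze_zero (fun n => dist_nonneg)
    (fun n => dist_triangle (a n) (b n) L)
  have h2' := tendsto_iff_dist_tendsto_zero.mp h2
  simpa using h1.add h2'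

theorem effros (hhom : ∀ a b : X, ∃ h : X ≃ₜ X, h a = b) (y : X) {ε : ℝ} (hε : 0 < ε) :
    ∃ r > 0, ∀ c, dist c y < r → ∃ h : X ≃ₜ X, h c = y ∧ ∀ z, dist (h z) z ≤ ε := by
  classical
  haveI : CompleteSpace C(X, X) :=
    (completeSpace_congr (ContinuousMap.isUniformEmbedding_equivBoundedOfCompact X X)).mpr
      inferInstance
  have hβ₀ : (0:ℝ) < min (ε/8) 1 := lt_min (by linarith) one_pos
  obtain ⟨r, hr, hrsub⟩ := star_lemma hhom y hβ₀
  refine ⟨r, hr, fun c hc => ?_⟩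
  -- it suffices to find H with H y = c and movement ≤ ε
  suffices hs : ∃ H : X ≃ₜ X, H y = c ∧ ∀ z, dist (H z) z ≤ ε by
    obtain ⟨H, hHy, hHm⟩ := hs
    exact ⟨H.symm, by rw [← hHy, H.symm_apply_apply], mov_symm hHm⟩
  set w := c with hwdef
  have hw : w ∈ closure (ESet (min (ε/8) 1) y) := hrsub (by simpa [mem_ball] using hc)
  -- the iterative construction
  set St := ((X ≃ₜ X) × (X ≃ₜ X) × ℝ) with hSt
  set Inv : ℕ → St → Prop := fun n s =>
    0 < s.2.2 ∧ s.2.2 ≤ ε/8 * (1/2)^n ∧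
      (∀ u v : X, dist u v ≤ s.2.2 → dist (s.1.symm u) (s.1.symm v) ≤ (1/2)^n) ∧
      s.2.1 w ∈ closure (ESet s.2.2 (s.1 y)) with hInv
  set R : ℕ → St → St → Prop := fun n s t =>
    (∀ z, dist (t.1 z) (s.1 z) ≤ ε/8 * (1/2)^n) ∧
    (∀ z, dist (t.1.symm z) (s.1.symm z) ≤ (1/2)^n) ∧
    (∀ z, dist (t.2.1 z) (s.2.1 z) ≤ ε/16 * (1/2)^n) ∧
    (∀ z, dist (t.2.1.symm z) (s.2.1.symm z) ≤ (1/2)^n) ∧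
    dist (t.1 y) (t.2.1 w) ≤ (1/2)^n with hR
  have hhalf : ∀ n : ℕ, (0:ℝ) < (1/2)^n := fun n => by positivity
  have step : ∀ n (s : St), Inv n s → ∃ t : St, Inv (n+1) t ∧ R n s t := by
    rintro n ⟨P, Q, β⟩ ⟨hβ0, hβle, hPmod, hmem⟩
    obtain ⟨η, hη0, hηmod⟩ := uc_modulus Q.symm (hhalf (n+1))
    set β' := min (ε/16 * (1/2)^n) η with hβ'
    have hβ'0 : 0 < β' := lt_min (by positivity) hη0
    obtain ⟨r', hr'0, hr'sub⟩ := star_lemma hhom (Q w) hβ'0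
    have hmin1 : 0 < min r' ((1/2)^(n+1)) := lt_min hr'0 (hhalf _)
    obtain ⟨z, hzE, hdz⟩ := Metric.mem_closure_iff.mp hmem _ hmin1
    obtain ⟨g, hgmov, hgPy⟩ := hzE
    set P' := P.trans g with hP'
    have ha'1 : P' y = g (P y) := rfl
    have ha'ball : P' y ∈ ball (Q w) r' := by
      rw [mem_ball, ha'1, hgPy, dist_comm]
      exact lt_of_lt_of_le hdz (min_le_left _ _)
    have ha'mem : P' y ∈ closure (ESet β' (Q w)) := hr'sub ha'ball
    obtain ⟨η₂, hη₂0, hη₂mod⟩ := uc_modulus P'.symm (hhalf (n+1))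
    set β'' := min (ε/8 * (1/2)^(n+1)) η₂ with hβ''
    have hβ''0 : 0 < β'' := lt_min (by positivity) hη₂0
    obtain ⟨r'', hr''0, hr''sub⟩ := star_lemma hhom (P' y) hβ''0
    have hmin2 : 0 < min r'' ((1/2)^(n+1)) := lt_min hr''0 (hhalf _)
    obtain ⟨z₂, hz₂E, hdz₂⟩ := Metric.mem_closure_iff.mp ha'mem _ hmin2
    obtain ⟨hh, hhmov, hhQw⟩ := hz₂E
    set Q' := Q.trans hh with hQ'
    have hb'1 : Q' w = hh (Q w) := rfl
    have hb'mem : Q' w ∈ closure (ESet β'' (P' y)) := by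
      apply hr''sub
      rw [mem_ball, hb'1, hhQw, dist_comm]
      exact lt_of_lt_of_le hdz₂ (min_le_left _ _)
    refine ⟨⟨P', Q', β''⟩, ⟨hβ''0, min_le_left _ _, ?_, hb'mem⟩, ?_, ?_, ?_, ?_, ?_⟩
    · intro u v huv
      exact hη₂mod u v (le_trans huv (min_le_right _ _))
    · -- P movement
      intro z'
      show dist (g (P z')) (P z') ≤ ε/8 * (1/2)^n
      exact le_trans (hgmov (P z')) hβle
    · -- P symm movement
      intro z'
      show dist (P.symm (g.symm z')) (P.symm z') ≤ (1/2)^n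
      exact hPmod _ _ (mov_symm hgmov z')
    · -- Q movement
      intro z'
      show dist (hh (Q z')) (Q z') ≤ ε/16 * (1/2)^n
      exact le_trans (hhmov (Q z')) (min_le_left _ _)
    · -- Q symm movement
      intro z'
      show dist (Q.symm (hh.symm z')) (Q.symm z') ≤ (1/2)^n
      have h1 : dist (hh.symm z') z' ≤ η :=
        le_trans (mov_symm hhmov z') (min_le_right _ _)
      exact le_trans (hηmod _ _ h1) (pow_le_pow_of_le_one (by norm_num) (by norm_num)
        (Nat.le_succ n))
    · -- endpoint distance
      show dist (P' y) (Q' w) ≤ (1/2)^n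
      rw [hb'1, hhQw]
      exact le_trans hdz₂.le (le_trans (min_le_right _ _)
        (pow_le_pow_of_le_one (by norm_num) (by norm_num) (Nat.le_succ n)))
  -- base state
  have hmod0 : ∀ u v : X, dist u v ≤ min (ε/8) 1 →
      dist ((Homeomorph.refl X).symm u) ((Homeomorph.refl X).symm v) ≤ (1/2)^0 := by
    intro u v huv
    simpa using le_trans huv (by simpa using min_le_right (ε/8) 1)
  have hmem0 : (Homeomorph.refl X, Homeomorph.refl X, min (ε/8) 1).2.1 w ∈
      closure (ESet (min (ε/8) 1) ((Homeomorph.refl X) y)) := by simpa using hw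
  have hInv0 : Inv 0 (Homeomorph.refl X, Homeomorph.refl X, min (ε/8) 1) :=
    ⟨hβ₀, by simpa using min_le_left (ε/8) 1, hmod0, hmem0⟩
  -- the recursive sequence
  let seq : ∀ n : ℕ, {s : St // Inv n s} := fun n =>
    Nat.rec ⟨_, hInv0⟩ (fun n p => ⟨(step n p.1 p.2).choose, (step n p.1 p.2).choose_spec.1⟩) n
  have hseq : ∀ n, R n (seq n).1 (seq (n+1)).1 :=
    fun n => (step n (seq n).1 (seq n).2).choose_spec.2
  set Pn : ℕ → X ≃ₜ X := fun n => (seq n).1.1 with hPndef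
  set Qn : ℕ → X ≃ₜ X := fun n => (seq n).1.2.1 with hQndef
  -- Cauchy sequences in C(X,X)
  have distP : ∀ n, dist (toCM (Pn n)) (toCM (Pn (n+1))) ≤ ε/8 * (1/2)^n := by
    intro n
    obtain ⟨h1, -, -, -, -⟩ := hseq n
    refine (ContinuousMap.dist_le (by positivity)).mpr fun z => ?_
    rw [dist_comm]
    exact h1 z
  have distPi : ∀ n, dist (toCM (Pn n).symm) (toCM (Pn (n+1)).symm) ≤ (1/2)^n := by
    intro n
    obtain ⟨-, h2, -, -, -⟩ := hseq n
    refine (ContinuousMap.dist_le (by positivity)).mpr fun z => ?_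
    rw [dist_comm]
    exact h2 z
  have distQ : ∀ n, dist (toCM (Qn n)) (toCM (Qn (n+1))) ≤ ε/16 * (1/2)^n := by
    intro n
    obtain ⟨-, -, h3, -, -⟩ := hseq n
    refine (ContinuousMap.dist_le (by positivity)).mpr fun z => ?_
    rw [dist_comm]
    exact h3 z
  have distQi : ∀ n, dist (toCM (Qn n).symm) (toCM (Qn (n+1)).symm) ≤ (1/2)^n := by
    intro n
    obtain ⟨-, -, -, h4, -⟩ := hseq n
    refine (ContinuousMap.dist_le (by positivity)).mpr fun z => ?_
    rw [dist_comm]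
    exact h4 z
  have sumg : Summable (fun n : ℕ => ((1:ℝ)/2)^n) := summable_geometric_two
  obtain ⟨F, hF⟩ := cauchySeq_tendsto_of_complete
    (cauchySeq_of_dist_le_of_summable _ distP (sumg.mul_left (ε/8)))
  obtain ⟨G, hG⟩ := cauchySeq_tendsto_of_complete
    (cauchySeq_of_dist_le_of_summable _ distPi sumg)
  obtain ⟨F2, hF2⟩ := cauchySeq_tendsto_of_complete
    (cauchySeq_of_dist_le_of_summable _ distQ (sumg.mul_left (ε/16)))
  obtain ⟨G2, hG2⟩ := cauchySeq_tendsto_of_complete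
    (cauchySeq_of_dist_le_of_summable _ distQi sumg)
  -- limits are mutually inverse
  have key : ∀ (A : ℕ → X ≃ₜ X) (FA GA : C(X,X)),
      Tendsto (fun n => toCM (A n)) atTop (nhds FA) →
      Tendsto (fun n => toCM (A n).symm) atTop (nhds GA) → ∀ z, GA (FA z) = z := by
    intro A FA GA hFA hGA z
    have pz : Tendsto (fun n => (toCM (A n)) z) atTop (nhds (FA z)) :=
      ((continuous_eval_const z).tendsto FA).comp hFA
    have t1 : Tendsto (fun n => GA ((toCM (A n)) z)) atTop (nhds (GA (FA z))) :=
      (GA.continuous.tendsto _).comp pz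
    have t2 : Tendsto (fun n => dist ((toCM (A n).symm) ((toCM (A n)) z))
        (GA ((toCM (A n)) z))) atTop (nhds 0) := by
      apply squeeze_zero (fun n => dist_nonneg)
        (fun n => ContinuousMap.dist_apply_le_dist _)
      exact tendsto_iff_dist_tendsto_zero.mp hGA
    have t3 : Tendsto (fun n => ((A n).symm ((A n) z))) atTop (nhds (GA (FA z))) :=
      tendsto_of_dist_tendsto t2 t1
    have t4 : (fun n => ((A n).symm ((A n) z))) = fun _ => z :=
      funext fun n => (A n).symm_apply_apply z
    rw [t4] at t3
    exact tendsto_nhds_unique t3 tendsto_const_nhds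
  have hFsymm : Tendsto (fun n => toCM ((Pn n).symm).symm) atTop (nhds F) := by
    have he : (fun n => toCM ((Pn n).symm).symm) = fun n => toCM (Pn n) := by
      funext n; rw [Homeomorph.symm_symm]
    rw [he]; exact hF
  have hF2symm : Tendsto (fun n => toCM ((Qn n).symm).symm) atTop (nhds F2) := by
    have he : (fun n => toCM ((Qn n).symm).symm) = fun n => toCM (Qn n) := by
      funext n; rw [Homeomorph.symm_symm]
    rw [he]; exact hF2
  have GF : ∀ z, G (F z) = z := key Pn F G hF hG
  have FG : ∀ z, F (G z) = z := key (fun n => (Pn n).symm) G F hG hFsymm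
  have G2F2 : ∀ z, G2 (F2 z) = z := key Qn F2 G2 hF2 hG2
  have F2G2 : ∀ z, F2 (G2 z) = z := key (fun n => (Qn n).symm) G2 F2 hG2 hF2symm
  set Pinf : X ≃ₜ X := ⟨⟨F, G, GF, FG⟩, F.continuous, G.continuous⟩ with hPinf
  set Qinf : X ≃ₜ X := ⟨⟨F2, G2, G2F2, F2G2⟩, F2.continuous, G2.continuous⟩ with hQinf
  -- movement bounds
  have pF : ∀ z, Tendsto (fun n => (toCM (Pn n)) z) atTop (nhds (F z)) := fun z =>
    ((continuous_eval_const z).tendsto F).comp hF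
  have pF2 : ∀ z, Tendsto (fun n => (toCM (Qn n)) z) atTop (nhds (F2 z)) := fun z =>
    ((continuous_eval_const z).tendsto F2).comp hF2
  have bndP : ∀ n (z : X), dist ((Pn n) z) z ≤ ε/4 * (1 - (1/2)^n) := by
    intro n
    induction n with
    | zero =>
      intro z
      show dist ((Pn 0) z) z ≤ ε/4 * (1 - (1/2)^(0:ℕ))
      have h0 : (Pn 0) z = z := rfl
      rw [h0]
      simp
    | succ n ih =>
      intro z
      obtain ⟨h1, -, -, -, -⟩ := hseq n
      calc dist ((Pn (n+1)) z) z ≤ dist ((Pn (n+1)) z) ((Pn n) z) + dist ((Pn n) z) z :=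
            dist_triangle _ _ _
        _ ≤ ε/8*(1/2)^n + ε/4*(1-(1/2)^n) := add_le_add (h1 z) (ih z)
        _ = ε/4 * (1-(1/2)^(n+1)) := by ring
  have bndQ : ∀ n (z : X), dist ((Qn n) z) z ≤ ε/8 * (1 - (1/2)^n) := by
    intro n
    induction n with
    | zero =>
      intro z
      show dist ((Qn 0) z) z ≤ ε/8 * (1 - (1/2)^(0:ℕ))
      have h0 : (Qn 0) z = z := rfl
      rw [h0]
      simp
    | succ n ih =>
      intro z
      obtain ⟨-, -, h3, -, -⟩ := hseq n
      calc dist ((Qn (n+1)) z) z ≤ dist ((Qn (n+1)) z) ((Qn n) z) + dist ((Qn n) z) z :=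
            dist_triangle _ _ _
        _ ≤ ε/16*(1/2)^n + ε/8*(1-(1/2)^n) := add_le_add (h3 z) (ih z)
        _ = ε/8 * (1-(1/2)^(n+1)) := by ring
  have movP : ∀ z, dist (F z) z ≤ ε/4 := by
    intro z
    have td : Tendsto (fun n => dist ((toCM (Pn n)) z) z) atTop (nhds (dist (F z) z)) :=
      (pF z).dist tendsto_const_nhds
    refine le_of_tendsto td (Filter.Eventually.of_forall fun n => ?_)
    refine (bndP n z).trans ?_
    have := hhalf n
    nlinarith
  have movQ : ∀ z, dist (F2 z) z ≤ ε/8 := by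
    intro z
    have td : Tendsto (fun n => dist ((toCM (Qn n)) z) z) atTop (nhds (dist (F2 z) z)) :=
      (pF2 z).dist tendsto_const_nhds
    refine le_of_tendsto td (Filter.Eventually.of_forall fun n => ?_)
    refine (bndQ n z).trans ?_
    have := hhalf n
    nlinarith
  -- the endpoints agree in the limit
  have hd5 : ∀ n, dist ((Pn (n+1)) y) ((Qn (n+1)) w) ≤ (1/2)^n := fun n =>
    (hseq n).2.2.2.2
  have tEq : F y = F2 w := by
    have t1 : Tendsto (fun n => dist ((toCM (Pn (n+1))) y) ((toCM (Qn (n+1))) w)) atTop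
        (nhds (dist (F y) (F2 w))) :=
      Filter.Tendsto.dist ((pF y).comp (tendsto_add_atTop_nat 1))
        ((pF2 w).comp (tendsto_add_atTop_nat 1))
    have t0 : Tendsto (fun n : ℕ => ((1:ℝ)/2)^n) atTop (nhds 0) :=
      tendsto_pow_atTop_nhds_zero_of_lt_one (by norm_num) (by norm_num)
    have hle : dist (F y) (F2 w) ≤ 0 := le_of_tendsto_of_tendsto' t1 t0 hd5
    exact dist_le_zero.mp hle
  refine ⟨Pinf.trans Qinf.symm, ?_, ?_⟩
  · show Qinf.symm (Pinf y) = w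
    have h1 : Pinf y = Qinf w := tEq
    rw [h1, Qinf.symm_apply_apply]
  · intro z
    have movQ' : ∀ u, dist (Qinf u) u ≤ ε/8 := movQ
    have h1 : dist (Qinf.symm (Pinf z)) (Pinf z) ≤ ε/8 := mov_symm movQ' (Pinf z)
    have h2 : dist (Pinf z) z ≤ ε/4 := movP z
    calc dist ((Pinf.trans Qinf.symm) z) z
        ≤ dist (Qinf.symm (Pinf z)) (Pinf z) + dist (Pinf z) z := dist_triangle _ _ _
      _ ≤ ε/8 + ε/4 := add_le_add h1 h2
      _ ≤ ε := by linarith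

end EffrosSection

lemma mem_fcs_iff {x z : Y} : z ∈ fcs x ↔ ∃ K : Set Y, IsFilament K ∧ x ∈ K ∧ z ∈ K := by
  constructor
  · rintro ⟨K, ⟨hK, hxK⟩, hzK⟩
    exact ⟨K, hK, hxK, hzK⟩
  · rintro ⟨K, hK, hxK, hzK⟩
    exact ⟨K, ⟨hK, hxK⟩, hzK⟩

lemma isFilament_himage (h : Y ≃ₜ Y) {K : Set Y} (hK : IsFilament K) : IsFilament (h '' K) := by
  obtain ⟨hc, hconn, U, hU, hKU, hnd⟩ := hK
  refine ⟨hc.image h.continuous, hconn.image _ h.continuous.continuousOn, h '' U,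
    (Homeomorph.isOpen_image h).mpr hU, image_mono hKU, ?_⟩
  rintro k' ⟨k, hk, rfl⟩
  have hnd' := hnd k hk
  unfold IsNowhereDense at hnd' ⊢
  rw [← h.image_connectedComponentIn (hKU hk), ← h.image_closure, ← h.image_interior,
    hnd', image_empty]

lemma fcs_chain (hadd : ∀ K L : Set Y, IsFilament K → IsFilament L → (K ∩ L).Nonempty →
      IsFilament (K ∪ L)) {x a b : Y} (ha : a ∈ fcs x) (hb : b ∈ fcs x) :
    ∃ F : Set Y, IsFilament F ∧ a ∈ F ∧ b ∈ F := by
  obtain ⟨K, hK, hxK, haK⟩ := mem_fcs_iff.mp ha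
  obtain ⟨L, hL, hxL, hbL⟩ := mem_fcs_iff.mp hb
  exact ⟨K ∪ L, hadd K L hK hL ⟨x, hxK, hxL⟩, Or.inl haK, Or.inr hbL⟩

/-- Symmetry of the non-singularity relation in a filament additive
homogeneous continuum with dense filament composants. -/
theorem stmt_16 {Y : Type*} [TopologicalSpace Y] [CompactSpace Y] [ConnectedSpace Y]
    [TopologicalSpace.MetrizableSpace Y] [Nontrivial Y]
    (hhom : ∀ a b : Y, ∃ h : Y ≃ₜ Y, h a = b)
    (hadd : ∀ K L : Set Y, IsFilament K → IsFilament L → (K ∩ L).Nonempty →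
      IsFilament (K ∪ L))
    (hdense : ∀ x : Y, Dense (fcs x))
    (x y : Y)
    (h : ∃ C : Set Y, C ⊆ fcs x ∧ IsConnected C ∧ x ∈ C ∧ y ∈ closure C ∧
      closure C ≠ Set.univ) :
    ∃ C : Set Y, C ⊆ fcs y ∧ IsConnected C ∧ y ∈ C ∧ x ∈ closure C ∧
      closure C ≠ Set.univ := by
  classical
  obtain ⟨C, hCsub, hCconn, hxC, hyCl, hCne⟩ := h
  letI : MetricSpace Y := TopologicalSpace.metrizableSpaceMetric Y
  haveI : Nonempty Y := ⟨x⟩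
  -- a point far away from `closure C`
  have hex : ∃ p, p ∉ closure C := by
    by_contra hcon
    push_neg at hcon
    exact hCne (eq_univ_iff_forall.mpr hcon)
  obtain ⟨p, hp⟩ := hex
  obtain ⟨ε₀, hε₀, hball⟩ := Metric.isOpen_iff.mp (isClosed_closure (s := C)).isOpen_compl p hp
  -- for each n, a small homeomorphism taking a point of C to y
  have hstep : ∀ n : ℕ, ∃ (c : Y) (g : Y ≃ₜ Y), c ∈ C ∧ g c = y ∧
      ∀ z, dist (g z) z ≤ min (ε₀/2) ((1/2)^n) := by
    intro n
    have hpos : 0 < min (ε₀/2) ((1/2)^n) := lt_min (by linarith) (by positivity)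
    obtain ⟨r, hr, heff⟩ := effros hhom y hpos
    obtain ⟨c, hcC, hcd⟩ := Metric.mem_closure_iff.mp hyCl r hr
    obtain ⟨g, hgc, hgm⟩ := heff c (by rwa [dist_comm])
    exact ⟨c, g, hcC, hgc, hgm⟩
  choose cn gn hcnC hgcn hmov using hstep
  set C' : Set Y := ⋃ n, (gn n) '' C with hC'
  have hyC' : y ∈ C' := mem_iUnion.mpr ⟨0, ⟨cn 0, hcnC 0, hgcn 0⟩⟩
  -- C' is contained in the filament composant of y
  have hsub : C' ⊆ fcs y := by
    intro z hz
    obtain ⟨n, hn⟩ := mem_iUnion.mp hz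
    obtain ⟨c', hc', hcz⟩ := hn
    subst hcz
    obtain ⟨F, hF, hc'F, hcnF⟩ := fcs_chain hadd (hCsub hc') (hCsub (hcnC n))
    refine mem_fcs_iff.mpr ⟨(gn n) '' F, isFilament_himage _ hF, ?_, ⟨c', hc'F, rfl⟩⟩
    exact ⟨cn n, hcnF, hgcn n⟩
  -- C' is connected
  have hconn : IsConnected C' := by
    refine ⟨⟨y, hyC'⟩, ?_⟩
    rw [hC', ← sUnion_range]
    refine isPreconnected_sUnion y _ ?_ ?_
    · rintro s ⟨n, rfl⟩
      exact ⟨cn n, hcnC n, hgcn n⟩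
    · rintro s ⟨n, rfl⟩
      exact hCconn.isPreconnected.image _ (gn n).continuous.continuousOn
  -- x is in the closure of C'
  have hxcl : x ∈ closure C' := by
    rw [Metric.mem_closure_iff]
    intro δ hδ
    obtain ⟨n, hnlt⟩ := exists_pow_lt_of_lt_one hδ (by norm_num : (1:ℝ)/2 < 1)
    refine ⟨(gn n) x, mem_iUnion.mpr ⟨n, ⟨x, hxC, rfl⟩⟩, ?_⟩
    calc dist x ((gn n) x) = dist ((gn n) x) x := dist_comm _ _
      _ ≤ min (ε₀/2) ((1/2)^n) := hmov n x
      _ ≤ (1/2)^n := min_le_right _ _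
      _ < δ := hnlt
  -- closure C' is not everything
  have hne : closure C' ≠ univ := by
    intro hEq
    have hpmem : p ∈ closure C' := hEq ▸ mem_univ p
    obtain ⟨z, hzC', hdz⟩ := Metric.mem_closure_iff.mp hpmem (ε₀/2) (by linarith)
    obtain ⟨n, hn⟩ := mem_iUnion.mp hzC'
    obtain ⟨c', hc', hcz⟩ := hn
    subst hcz
    have h1 : dist ((gn n) c') c' ≤ ε₀/2 := le_trans (hmov n c') (min_le_left _ _)
    have h2 : ε₀ ≤ dist c' p := by
      by_contra hlt
      push_neg at hlt
      exact (hball (mem_ball.mpr hlt)) (subset_closure hc')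
    have h3 : dist c' p ≤ dist c' ((gn n) c') + dist ((gn n) c') p := dist_triangle _ _ _
    rw [dist_comm c' ((gn n) c')] at h3
    rw [dist_comm p ((gn n) c')] at hdz
    linarith
  exact ⟨C', hsub, hconn, hyC', hxcl, hne⟩
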